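/- Let τ be a dual-criticality task system, let 0 ≤ t1 < t2 be reals, and for each task i let R_i be a release set for it. For each i in U (the set of LC tasks together with HC tasks in case 1), let dem_i := C_i^L · |{x ∈ R_i : x + D_i^L ≤ t1}| + Σ_{x ∈ R_i with x < t1 < x + D_i^L ≤ t2} min(C_i^L, t1 − x); for each HC task i in case 2 or case 3, let dem_i := C_i^H · |{x ∈ R_i : x + D_i ≤ t2 and x + D_i^L > t1}| + C_i^L · |{x ∈ R_i : x + D_i ≤ t2 and x + D_i^L ≤ t1}|. Then Σ_i dem_i ≤ N(t1,t2). (This is the job-level soundness of the demand bound of Theorem 1 of the paper.) -/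

import Mathlib

open scoped Classical
open Finset

namespace MC

/-- `MOD t T = t - ⌊t/T⌋·T`. -/
noncomputable def MOD (t T : ℝ) : ℝ := t - (⌊t / T⌋ : ℝ) * T

/-- A dual-criticality sporadic task: minimum separation `T > 0`, low-criticality WCET
`CL` and high-criticality WCET `CH` with `0 < CL ≤ CH`, real deadline `D` and tightened
deadline `DL` with `CL ≤ DL ≤ D ≤ T`. -/
structure Task where
  T : ℝ
  D : ℝ
  DL : ℝ
  CL : ℝ
  CH : ℝ
  hT : 0 < T
  hCL : 0 < CL
  hCLCH : CL ≤ CH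
  hCLDL : CL ≤ DL
  hDLD : DL ≤ D
  hDT : D ≤ T

/-- Low-criticality demand bound function `dbf^L(t)`. -/
noncomputable def dbfL (τ : Task) (t : ℝ) : ℝ :=
  max 0 (((⌊(t - τ.DL) / τ.T⌋ : ℝ) + 1) * τ.CL)

/-- High-criticality demand bound function `dbf^H(t)`. -/
noncomputable def dbfH (τ : Task) (t : ℝ) : ℝ :=
  max 0 (((⌊(t - τ.D) / τ.T⌋ : ℝ) + 1) * τ.CH)

/-- Two-parameter low-criticality demand bound `dbf^L(t1, t2)`. -/
noncomputable def dbfL2 (τ : Task) (t1 t2 : ℝ) : ℝ :=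
  max 0 ((⌊(t2 - τ.D) / τ.T⌋ : ℝ) - (⌊(t2 - t1 - τ.D) / τ.T⌋ : ℝ) - 1) * τ.CL

/-- Unnecessary-job demand bound `dbf^{UN}(t1, t2)`. -/
noncomputable def dbfUN (τ : Task) (t1 t2 : ℝ) : ℝ :=
  if MOD t1 τ.T < τ.DL ∧ (⌊t1 / τ.T⌋ : ℝ) * τ.T + τ.DL ≤ t2 then
    min τ.CL (MOD t1 τ.T)
  else 0

/-- Maximum carry-over execution `CO(t)` pending at the start of an interval of length `t`. -/
noncomputable def CO (τ : Task) (t : ℝ) : ℝ :=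
  min τ.CL (MOD t τ.T - (τ.D - τ.DL))

/-- A release set for a task: a finite set of nonnegative reals, any two distinct
elements of which differ by at least the minimum separation `T`. -/
def ReleaseSet (τ : Task) (R : Finset ℝ) : Prop :=
  (∀ x ∈ R, 0 ≤ x) ∧ ∀ x ∈ R, ∀ y ∈ R, x ≠ y → τ.T ≤ |x - y|

/-- Case 1: `t2 - t1 ≤ D - D^L`; no job of the task executes after the switch. -/
def case1 (τ : Task) (t1 t2 : ℝ) : Prop := t2 - t1 ≤ τ.D - τ.DL

/-- Case 2: the carry-over job contributes demand after the switch. -/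
def case2 (τ : Task) (t1 t2 : ℝ) : Prop :=
  τ.D - τ.DL < MOD (t2 - t1) τ.T ∧ MOD (t2 - t1) τ.T < τ.D ∧
    (⌊(t2 - t1) / τ.T⌋ : ℝ) * τ.T + τ.D ≤ t2

/-- Case 3: neither case 1 nor case 2. -/
def case3 (τ : Task) (t1 t2 : ℝ) : Prop := ¬ case1 τ t1 t2 ∧ ¬ case2 τ t1 t2

/-- Set `S(t)` of HC tasks whose carry-over job contributes demand in an interval of
length `t` (existing test). -/
noncomputable def Sset {n : ℕ} (τ : Fin n → Task) (hc : Fin n → Bool) (t : ℝ) :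
    Finset (Fin n) :=
  univ.filter fun i =>
    hc i = true ∧ (τ i).D - (τ i).DL < MOD t (τ i).T ∧ MOD t (τ i).T < (τ i).D

/-- The existing-test bound `E(t)` (Proposition 3, from Ekberg and Yi). -/
noncomputable def Etest {n : ℕ} (τ : Fin n → Task) (hc : Fin n → Bool) (t : ℝ) : ℝ :=
  ∑ i ∈ univ.filter (fun i => hc i = true), dbfH (τ i) t +
    ∑ i ∈ Sset τ hc t, (((τ i).CH - (τ i).CL) + CO (τ i) t)

/-- `U`: the set of LC tasks together with HC tasks in case 1. -/
noncomputable def Uset {n : ℕ} (τ : Fin n → Task) (hc : Fin n → Bool) (t1 t2 : ℝ) :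
    Finset (Fin n) :=
  univ.filter fun i => hc i = false ∨ case1 (τ i) t1 t2

/-- HC tasks in case 2. -/
noncomputable def H2set {n : ℕ} (τ : Fin n → Task) (hc : Fin n → Bool) (t1 t2 : ℝ) :
    Finset (Fin n) :=
  univ.filter fun i => hc i = true ∧ case2 (τ i) t1 t2

/-- HC tasks in case 3. -/
noncomputable def H3set {n : ℕ} (τ : Fin n → Task) (hc : Fin n → Bool) (t1 t2 : ℝ) :
    Finset (Fin n) :=
  univ.filter fun i => hc i = true ∧ case3 (τ i) t1 t2

/-- The new-test bound `N(t1,t2)` of Theorem 1. -/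
noncomputable def Ntest {n : ℕ} (τ : Fin n → Task) (hc : Fin n → Bool) (t1 t2 : ℝ) : ℝ :=
  ∑ i ∈ Uset τ hc t1 t2, (dbfL (τ i) t1 + dbfUN (τ i) t1 t2) +
    ∑ i ∈ H2set τ hc t1 t2, (dbfL2 (τ i) t1 t2 + dbfH (τ i) (t2 - t1) + (τ i).CH) +
    ∑ i ∈ H3set τ hc t1 t2, (dbfL2 (τ i) t1 t2 + dbfH (τ i) (t2 - t1) + (τ i).CL)

/-- Collective bound `dbf_{UN}(t1,t2)` on the demand of all unnecessary jobs (Lemma 5). -/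
noncomputable def dbfUNtot {n : ℕ} (τ : Fin n → Task) (hc : Fin n → Bool) (t1 t2 : ℝ) : ℝ :=
  if h : (Uset τ hc t1 t2).Nonempty then
    min ((Uset τ hc t1 t2).sup' h fun i => (τ i).DL)
      (∑ i ∈ Uset τ hc t1 t2, dbfUN (τ i) t1 t2)
  else 0

/-- `dbf_{L1}(t1,t2)` (Lemma 7). -/
noncomputable def dbfL1tot {n : ℕ} (τ : Fin n → Task) (hc : Fin n → Bool) (t1 t2 : ℝ) : ℝ :=
  dbfUNtot τ hc t1 t2 + ∑ i ∈ Uset τ hc t1 t2, dbfL (τ i) t1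

/-- `dbf_{L2}(t1,t2)` (Lemma 8). -/
noncomputable def dbfL2tot {n : ℕ} (τ : Fin n → Task) (hc : Fin n → Bool) (t1 t2 : ℝ) : ℝ :=
  ∑ i ∈ H2set τ hc t1 t2, (dbfL2 (τ i) t1 t2 + (τ i).CL - CO (τ i) (t2 - t1))

/-- `dbf_{L3}(t1,t2)` (Lemma 9). -/
noncomputable def dbfL3tot {n : ℕ} (τ : Fin n → Task) (hc : Fin n → Bool) (t1 t2 : ℝ) : ℝ :=
  ∑ i ∈ H3set τ hc t1 t2, (dbfL2 (τ i) t1 t2 + (τ i).CL)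

/-- The improved-test bound `I(t1,t2)` of Theorem 2. -/
noncomputable def Itest {n : ℕ} (τ : Fin n → Task) (hc : Fin n → Bool) (t1 t2 : ℝ) : ℝ :=
  min t1 (dbfL1tot τ hc t1 t2 + dbfL2tot τ hc t1 t2 + dbfL3tot τ hc t1 t2) +
    (∑ i ∈ H2set τ hc t1 t2, dbfH (τ i) (t2 - t1) +
      ∑ i ∈ H3set τ hc t1 t2, dbfH (τ i) (t2 - t1)) +
    ∑ i ∈ H2set τ hc t1 t2, (CO (τ i) (t2 - t1) + (τ i).CH - (τ i).CL)


/-! ### Auxiliary counting lemmas -/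

lemma sep_card_Icc (T : ℝ) (hT : 0 < T) (S : Finset ℝ)
    (hsep : ∀ x ∈ S, ∀ y ∈ S, x ≠ y → T ≤ |x - y|)
    (a b : ℝ) (hmem : ∀ x ∈ S, a ≤ x ∧ x ≤ b) (hS : S.Nonempty) :
    (S.card : ℤ) ≤ ⌊(b - a) / T⌋ + 1 := by
  set K := ⌊(b - a) / T⌋ with hK
  have hmono : ∀ x y : ℝ, y + T ≤ x → ⌊(y - a)/T⌋ + 1 ≤ ⌊(x - a)/T⌋ := by
    intro x y h
    have h2 : (1:ℝ) ≤ (x - y)/T := (one_le_div hT).mpr (by linarith)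
    have h3 : (x - a)/T = (y - a)/T + (x - y)/T := by ring
    have h1 : (y - a)/T + 1 ≤ (x - a)/T := by rw [h3]; linarith
    calc ⌊(y - a)/T⌋ + 1 = ⌊(y - a)/T + 1⌋ := by rw [Int.floor_add_one]
      _ ≤ ⌊(x - a)/T⌋ := Int.floor_le_floor h1
  have hinj : Set.InjOn (fun x => ⌊(x - a)/T⌋) S := by
    intro x hx y hy hxy
    have hxy' : ⌊(x - a)/T⌋ = ⌊(y - a)/T⌋ := hxy
    by_contra hne
    have h := hsep x hx y hy hne
    rcases abs_cases (x - y) with ⟨h1, _⟩ | ⟨h1, _⟩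
    · rw [h1] at h
      have := hmono x y (by linarith)
      omega
    · rw [h1] at h
      have := hmono y x (by linarith)
      omega
  have himg : S.image (fun x => ⌊(x - a)/T⌋) ⊆ Finset.Icc 0 K := by
    intro z hz
    rcases Finset.mem_image.mp hz with ⟨x, hx, rfl⟩
    obtain ⟨h1, h2⟩ := hmem x hx
    rw [Finset.mem_Icc]
    refine ⟨Int.floor_nonneg.mpr (div_nonneg (by linarith) hT.le), Int.floor_le_floor (by gcongr)⟩
  have hK0 : 0 ≤ K := by
    obtain ⟨x, hx⟩ := hS
    obtain ⟨h1, h2⟩ := hmem x hx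
    exact Int.floor_nonneg.mpr (div_nonneg (by linarith) hT.le)
  have hcard : S.card ≤ (Finset.Icc 0 K).card := by
    rw [← Finset.card_image_of_injOn hinj]
    exact Finset.card_le_card himg
  rw [Int.card_Icc] at hcard
  omega

lemma sep_card_Ioc (T : ℝ) (hT : 0 < T) (S : Finset ℝ)
    (hsep : ∀ x ∈ S, ∀ y ∈ S, x ≠ y → T ≤ |x - y|)
    (a b : ℝ) (hmem : ∀ x ∈ S, a < x ∧ x ≤ b) (hS : S.Nonempty) :
    (S.card : ℤ) ≤ ⌈(b - a) / T⌉ := by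
  set m := S.min' hS with hm
  have hmS : m ∈ S := S.min'_mem hS
  have ham : a < m := (hmem m hmS).1
  have h1 : (S.card : ℤ) ≤ ⌊(b - m) / T⌋ + 1 :=
    sep_card_Icc T hT S hsep m b
      (fun x hx => ⟨S.min'_le x hx, (hmem x hx).2⟩) hS
  have h2 : ⌊(b - m) / T⌋ < ⌈(b - a) / T⌉ := by
    apply Int.floor_lt.mpr
    calc (b - m)/T < (b - a)/T := by gcongr
      _ ≤ ⌈(b - a)/T⌉ := Int.le_ceil _
  omega

lemma sep_card_le_one (T : ℝ) (hT : 0 < T) (S : Finset ℝ)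
    (hsep : ∀ x ∈ S, ∀ y ∈ S, x ≠ y → T ≤ |x - y|)
    (a b : ℝ) (hba : b - a ≤ T) (hmem : ∀ x ∈ S, a < x ∧ x ≤ b) :
    S.card ≤ 1 := by
  rcases S.eq_empty_or_nonempty with rfl | hS
  · simp
  · have h1 := sep_card_Ioc T hT S hsep a b hmem hS
    have h2 : ⌈(b - a) / T⌉ ≤ 1 := Int.ceil_le.mpr (by
      push_cast; rw [div_le_one hT]; linarith)
    omega

lemma MOD_nonneg {T : ℝ} (hT : 0 < T) (t : ℝ) : 0 ≤ MOD t T := by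
  have h1 : (⌊t / T⌋ : ℝ) ≤ t / T := Int.floor_le _
  have h2 : (⌊t / T⌋ : ℝ) * T ≤ (t / T) * T := mul_le_mul_of_nonneg_right h1 hT.le
  rw [div_mul_cancel₀ _ hT.ne'] at h2
  unfold MOD; linarith

lemma MOD_lt {T : ℝ} (hT : 0 < T) (t : ℝ) : MOD t T < T := by
  have h1 : t / T < (⌊t / T⌋ : ℝ) + 1 := Int.lt_floor_add_one _
  have h2 : (t / T) * T < ((⌊t / T⌋ : ℝ) + 1) * T := mul_lt_mul_of_pos_right h1 hT
  rw [div_mul_cancel₀ _ hT.ne'] at h2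
  unfold MOD; linarith

lemma dbfUN_nonneg (τ : Task) (t1 t2 : ℝ) : 0 ≤ dbfUN τ t1 t2 := by
  unfold dbfUN
  split
  · exact le_min τ.hCL.le (MOD_nonneg τ.hT t1)
  · exact le_rfl

lemma lemA (τ : Task) (R : Finset ℝ) (hR : ReleaseSet τ R) (t1 t2 : ℝ)
    (ht1 : 0 ≤ t1) (ht12 : t1 < t2) :
    τ.CL * ((R.filter (fun x => x + τ.DL ≤ t1)).card : ℝ) +
      ∑ x ∈ R.filter (fun x => x < t1 ∧ t1 < x + τ.DL ∧ x + τ.DL ≤ t2),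
        min τ.CL (t1 - x) ≤ dbfL τ t1 + dbfUN τ t1 t2 := by
  obtain ⟨hpos, hsep⟩ := hR
  have hT := τ.hT
  have hCL := τ.hCL
  have hDLT : τ.DL ≤ τ.T := τ.hDLD.trans τ.hDT
  have hDL0 : 0 < τ.DL := hCL.trans_le τ.hCLDL
  set B := R.filter (fun x => x + τ.DL ≤ t1) with hBdef
  set Ca := R.filter (fun x => x < t1 ∧ t1 < x + τ.DL ∧ x + τ.DL ≤ t2) with hCadef
  set K := ⌊(t1 - τ.DL) / τ.T⌋ with hKdef
  set F := ⌊t1 / τ.T⌋ with hFdef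
  have hUN0 : 0 ≤ dbfUN τ t1 t2 := dbfUN_nonneg τ t1 t2
  have hdbfL_ge : ((K : ℝ) + 1) * τ.CL ≤ dbfL τ t1 := le_max_right _ _
  have hBmem : ∀ x ∈ B, 0 ≤ x ∧ x ≤ t1 - τ.DL := by
    intro x hx
    have h := Finset.mem_filter.mp hx
    exact ⟨hpos x h.1, by linarith [h.2]⟩
  have hBsep : ∀ x ∈ B, ∀ y ∈ B, x ≠ y → τ.T ≤ |x - y| := fun x hx y hy =>
    hsep x (Finset.filter_subset _ _ hx) y (Finset.filter_subset _ _ hy)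
  have hBle : ∀ k : ℤ, K ≤ k → (0:ℤ) ≤ k → (B.card : ℝ) ≤ (k : ℝ) + 1 := by
    intro k hk hk0
    rcases B.eq_empty_or_nonempty with hBe | hBn
    · rw [hBe]; simp
      have : (0:ℝ) ≤ (k:ℝ) := by exact_mod_cast hk0
      linarith
    · have h1 := sep_card_Icc τ.T hT B hBsep 0 (t1 - τ.DL) hBmem hBn
      rw [sub_zero] at h1
      have : (B.card : ℤ) ≤ k + 1 := by omega
      exact_mod_cast this
  have hCa1 : Ca.card ≤ 1 := by
    apply sep_card_le_one τ.T hT Ca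
      (fun x hx y hy => hsep x (Finset.filter_subset _ _ hx) y (Finset.filter_subset _ _ hy))
      (t1 - τ.DL) t1 (by linarith)
    intro x hx
    have h := (Finset.mem_filter.mp hx).2
    exact ⟨by linarith [h.2.1], h.1.le⟩
  rcases Nat.le_one_iff_eq_zero_or_eq_one.mp hCa1 with h0 | h1
  · -- no carry-over job
    rw [Finset.card_eq_zero.mp h0, Finset.sum_empty, add_zero]
    rcases B.eq_empty_or_nonempty with hBe | hBn
    · rw [hBe]
      simp only [Finset.card_empty, Nat.cast_zero, mul_zero]
      have : (0:ℝ) ≤ dbfL τ t1 := le_max_left _ _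
      linarith
    · obtain ⟨x, hx⟩ := hBn
      have hx' := hBmem x hx
      have hK0 : (0:ℤ) ≤ K := Int.floor_nonneg.mpr (div_nonneg (by linarith [hx'.1, hx'.2]) hT.le)
      have h2 := hBle K le_rfl hK0
      nlinarith
  · -- exactly one carry-over job x0
    obtain ⟨x0, hx0⟩ := Finset.card_eq_one.mp h1
    have hx0m : x0 ∈ Ca := hx0 ▸ Finset.mem_singleton_self x0
    have hx0f := Finset.mem_filter.mp hx0m
    have hx0R : x0 ∈ R := hx0f.1
    obtain ⟨hx0t1, hx0DL, hx0t2⟩ := hx0f.2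
    have hx00 : 0 ≤ x0 := hpos x0 hx0R
    rw [hx0, Finset.sum_singleton]
    have hmin_le : min τ.CL (t1 - x0) ≤ τ.CL := min_le_left _ _
    -- B elements are ≤ x0 - T
    have hBx0 : ∀ x ∈ B, 0 ≤ x ∧ x ≤ x0 - τ.T := by
      intro x hx
      have h := hBmem x hx
      have hne : x ≠ x0 := by intro h'; subst h'; linarith [h.2]
      have hs := hsep x (Finset.filter_subset _ _ hx) x0 hx0R hne
      rcases abs_cases (x - x0) with ⟨ha, _⟩ | ⟨ha, _⟩
      · rw [ha] at hs; constructor <;> nlinarith [h.2]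
      · rw [ha] at hs; exact ⟨h.1, by linarith⟩
    have hBleF : ∀ k : ℤ, ⌊x0 / τ.T⌋ ≤ k + 1 → (0:ℤ) ≤ k + 1 → (B.card : ℝ) ≤ (k : ℝ) + 1 := by
      intro k hk hk0
      rcases B.eq_empty_or_nonempty with hBe | hBn
      · rw [hBe]; simp
        have : (0:ℝ) ≤ (k:ℝ) + 1 := by exact_mod_cast hk0
        linarith
      · have h1 := sep_card_Icc τ.T hT B hBsep 0 (x0 - τ.T) hBx0 hBn
        rw [sub_zero] at h1
        have he : (x0 - τ.T) / τ.T = x0 / τ.T - 1 := by field_simp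
        rw [he] at h1
        have he2 : ⌊x0 / τ.T - 1⌋ = ⌊x0 / τ.T⌋ - 1 := by
          have := Int.floor_sub_intCast (x0 / τ.T) 1
          push_cast at this
          exact_mod_cast this
        rw [he2] at h1
        have : (B.card : ℤ) ≤ k + 1 := by omega
        exact_mod_cast this
    rcases lt_or_ge x0 ((F : ℝ) * τ.T) with hx0q | hx0q
    · -- x0 strictly before ⌊t1/T⌋T : one fewer earlier job possible
      have hF1 : (1:ℤ) ≤ F := by
        by_contra h
        push_neg at h
        have : (F:ℝ) ≤ 0 := by exact_mod_cast Int.lt_add_one_iff.mp h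
        nlinarith
      have hFx0 : ⌊x0 / τ.T⌋ ≤ F - 1 := by
        have : ⌊x0 / τ.T⌋ < F := Int.floor_lt.mpr (by rw [div_lt_iff₀ hT]; exact hx0q)
        omega
      have hFK : F - 1 ≤ K := by
        apply Int.le_floor.mpr
        have hFt1 : (F:ℝ) * τ.T ≤ t1 := by
          have := Int.floor_le (t1 / τ.T)
          calc (F:ℝ) * τ.T ≤ (t1 / τ.T) * τ.T := mul_le_mul_of_nonneg_right this hT.le
            _ = t1 := div_mul_cancel₀ _ hT.ne'
        rw [le_div_iff₀ hT]
        push_cast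
        linarith
      have hB2 := hBleF (F - 2) (by omega) (by omega)
      have : (B.card : ℝ) ≤ (K : ℝ) := by
        have hc : ((F:ℝ) - 2) + 1 ≤ (K:ℝ) := by
          have : ((F - 1 : ℤ) : ℝ) ≤ (K : ℝ) := by exact_mod_cast hFK
          push_cast at this ⊢
          linarith
        push_cast at hB2
        linarith
      nlinarith
    · -- x0 at or after ⌊t1/T⌋T
      have hqt1 : (F : ℝ) * τ.T ≤ t1 := by
        have := Int.floor_le (t1 / τ.T)
        calc (F:ℝ) * τ.T ≤ (t1 / τ.T) * τ.T := mul_le_mul_of_nonneg_right this hT.le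
          _ = t1 := div_mul_cancel₀ _ hT.ne'
      by_cases hMOD : MOD t1 τ.T < τ.DL
      · -- dbf^{UN} pays for the carry-over job
        have hUN : dbfUN τ t1 t2 = min τ.CL (MOD t1 τ.T) := by
          rw [dbfUN, if_pos]
          exact ⟨hMOD, by linarith⟩
        have hmin2 : min τ.CL (t1 - x0) ≤ min τ.CL (MOD t1 τ.T) := by
          apply min_le_min le_rfl
          unfold MOD
          linarith
        rcases B.eq_empty_or_nonempty with hBe | hBn
        · rw [hBe]
          simp only [Finset.card_empty, Nat.cast_zero, mul_zero, zero_add]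
          have : (0:ℝ) ≤ dbfL τ t1 := le_max_left _ _
          linarith [hmin2]
        · obtain ⟨x, hx⟩ := hBn
          have hx' := hBmem x hx
          have hK0 : (0:ℤ) ≤ K := Int.floor_nonneg.mpr (div_nonneg (by linarith [hx'.1, hx'.2]) hT.le)
          have h2 := hBle K le_rfl hK0
          nlinarith
      · -- MOD t1 T ≥ DL : one fewer earlier job
        push_neg at hMOD
        have hqDL : (F : ℝ) * τ.T ≤ t1 - τ.DL := by
          have : τ.DL ≤ t1 - (F:ℝ) * τ.T := by unfold MOD at hMOD; exact hMOD
          linarith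
        have hF0 : (0:ℤ) ≤ F := Int.floor_nonneg.mpr (div_nonneg ht1 hT.le)
        have hFK : F ≤ K := Int.le_floor.mpr (by rw [le_div_iff₀ hT]; exact hqDL)
        have hFx0 : ⌊x0 / τ.T⌋ ≤ F := Int.floor_le_floor (by gcongr)
        have hB2 := hBleF (F - 1) (by omega) (by omega)
        have hBK : (B.card : ℝ) ≤ (K : ℝ) := by
          have : ((F : ℤ) : ℝ) ≤ (K : ℝ) := by exact_mod_cast hFK
          push_cast at hB2 this ⊢
          linarith
        nlinarith
lemma budget (CL CH a b P Q s : ℝ) (hCL : 0 < CL) (hCH : CL ≤ CH)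
    (hb : 0 ≤ b) (hP : 0 ≤ P) (hQ : 0 ≤ Q) (hs : CL ≤ s)
    (haQ : (CH - CL) * a ≤ (CH - CL) * Q + s - CL) (hab : a + b ≤ P + Q + 1) (ha : 0 ≤ a) :
    CH * a + CL * b ≤ P * CL + Q * CH + s := by
  nlinarith [mul_le_mul_of_nonneg_left hab hCL.le]

lemma lemB_main (τ : Task) (R : Finset ℝ) (hR : ReleaseSet τ R) (t1 t2 : ℝ)
    (ht1 : 0 ≤ t1) (ht12 : t1 < t2) (s : ℝ)
    (hs : s = τ.CH ∨ (s = τ.CL ∧ ¬ case2 τ t1 t2)) :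
    τ.CH * ((R.filter (fun x => x + τ.D ≤ t2 ∧ t1 < x + τ.DL)).card : ℝ) +
      τ.CL * ((R.filter (fun x => x + τ.D ≤ t2 ∧ x + τ.DL ≤ t1)).card : ℝ) ≤
      dbfL2 τ t1 t2 + dbfH τ (t2 - t1) + s := by
  obtain ⟨hpos, hsep⟩ := hR
  have hT := τ.hT
  have hCL := τ.hCL
  have hDL0 : 0 < τ.DL := hCL.trans_le τ.hCLDL
  have hD0 : 0 < τ.D := hDL0.trans_le τ.hDLD
  set A := R.filter (fun x => x + τ.D ≤ t2 ∧ t1 < x + τ.DL) with hAdef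
  set B := R.filter (fun x => x + τ.D ≤ t2 ∧ x + τ.DL ≤ t1) with hBdef
  set f1 := ⌊(t2 - t1 - τ.D) / τ.T⌋ with hf1def
  set f2 := ⌊(t2 - τ.D) / τ.T⌋ with hf2def
  set P := max 0 ((f2 : ℝ) - (f1 : ℝ) - 1) with hPdef
  have hQ0 : (0:ℤ) ≤ f1 + 1 := by
    have : (-1 : ℤ) ≤ f1 := Int.le_floor.mpr (by
      rw [le_div_iff₀ hT]
      push_cast
      nlinarith [τ.hDT])
    omega
  have hQ0' : (0:ℝ) ≤ (f1 : ℝ) + 1 := by exact_mod_cast hQ0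
  have hdbfH : dbfH τ (t2 - t1) = ((f1 : ℝ) + 1) * τ.CH :=
    max_eq_right (mul_nonneg hQ0' (hCL.trans_le τ.hCLCH).le)
  have hdbfL2 : dbfL2 τ t1 t2 = P * τ.CL := rfl
  have hP0 : (0:ℝ) ≤ P := le_max_left _ _
  -- A ∪ B has at most f2 + 1 elements
  have hABsum : (A.card : ℝ) + (B.card : ℝ) ≤ P + ((f1:ℝ) + 1) + 1 := by
    set W := R.filter (fun x => x + τ.D ≤ t2) with hWdef
    have hdisjAB : Disjoint A B := by
      rw [Finset.disjoint_left]
      intro x hxA hxB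
      have h1 := (Finset.mem_filter.mp hxA).2
      have h2 := (Finset.mem_filter.mp hxB).2
      linarith [h1.2, h2.2]
    have hunion : A ∪ B = W := by
      ext x
      simp only [hAdef, hBdef, hWdef, Finset.mem_filter, Finset.mem_union]
      rcases le_or_gt (x + τ.DL) t1 with h | h <;> tauto
    have hsplit : A.card + B.card = W.card := by
      rw [← Finset.card_union_of_disjoint hdisjAB, hunion]
    have hWcard : (W.card : ℝ) ≤ (f2 : ℝ) + 1 := by
      rcases W.eq_empty_or_nonempty with hWe | hWn
      · rw [hWe]
        simp only [Finset.card_empty, Nat.cast_zero]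
        have hf2 : (-1 : ℤ) ≤ f2 := Int.le_floor.mpr (by
          rw [le_div_iff₀ hT]
          push_cast
          nlinarith [τ.hDT])
        have : ((-1 : ℤ) : ℝ) ≤ (f2 : ℝ) := by exact_mod_cast hf2
        push_cast at this
        linarith
      · have h1 := sep_card_Icc τ.T hT W
          (fun x hx y hy => hsep x (Finset.filter_subset _ _ hx) y (Finset.filter_subset _ _ hy))
          0 (t2 - τ.D)
          (fun x hx => ⟨hpos x (Finset.mem_filter.mp hx).1, by linarith [(Finset.mem_filter.mp hx).2]⟩) hWn
        rw [sub_zero] at h1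
        exact_mod_cast h1
    have hPf2 : (f2 : ℝ) + 1 ≤ P + ((f1:ℝ) + 1) + 1 := by
      have : (f2 : ℝ) - (f1 : ℝ) - 1 ≤ P := le_max_right _ _
      linarith
    calc (A.card : ℝ) + (B.card : ℝ) = (W.card : ℝ) := by exact_mod_cast hsplit
      _ ≤ (f2 : ℝ) + 1 := hWcard
      _ ≤ _ := hPf2
  -- bound on A
  have hAmem : ∀ x ∈ A, t1 - τ.DL < x ∧ x ≤ t2 - τ.D := by
    intro x hx
    have h := (Finset.mem_filter.mp hx).2
    exact ⟨by linarith [h.2], by linarith [h.1]⟩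
  have hAsep : ∀ x ∈ A, ∀ y ∈ A, x ≠ y → τ.T ≤ |x - y| := fun x hx y hy =>
    hsep x (Finset.filter_subset _ _ hx) y (Finset.filter_subset _ _ hy)
  have hAceil : A.Nonempty → (A.card : ℤ) ≤ ⌈(t2 - τ.D - (t1 - τ.DL)) / τ.T⌉ := fun hAn =>
    sep_card_Ioc τ.T hT A hAsep _ _ hAmem hAn
  have hAcard : ∀ k : ℤ, 0 ≤ k → (A.Nonempty → (A.card : ℤ) ≤ k) → (A.card : ℝ) ≤ (k : ℝ) := by
    intro k hk0 h
    rcases A.eq_empty_or_nonempty with hAe | hAn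
    · rw [hAe]; simp; exact_mod_cast hk0
    · exact_mod_cast h hAn
  rcases hs with hs | ⟨hs, hnc2⟩
  · -- generic bound: #A ≤ f1 + 2
    have hA2 : (A.card : ℝ) ≤ ((f1 : ℝ) + 1) + 1 := by
      have := hAcard (f1 + 2) (by omega) (fun hAn => by
        have h1 := hAceil hAn
        have h2 : ⌈(t2 - τ.D - (t1 - τ.DL)) / τ.T⌉ ≤ f1 + 2 := by
          apply Int.ceil_le.mpr
          rw [div_le_iff₀ hT]
          have h3 : t2 - t1 - τ.D < ((f1:ℝ) + 1) * τ.T := by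
            have := Int.lt_floor_add_one ((t2 - t1 - τ.D) / τ.T)
            rw [div_lt_iff₀ hT] at this
            push_cast at this ⊢
            linarith
          push_cast
          nlinarith [τ.hDLD, τ.hDT]
        omega)
      push_cast at this ⊢
      linarith
    rw [hdbfL2, hdbfH, hs]
    apply budget _ _ _ _ _ _ _ hCL τ.hCLCH (Nat.cast_nonneg _) hP0 hQ0' τ.hCLCH
      (by nlinarith [mul_le_mul_of_nonneg_left hA2 (sub_nonneg.mpr τ.hCLCH)])
      hABsum (Nat.cast_nonneg _)
  · -- case-3 bound: #A ≤ f1 + 1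
    set G := ⌊(t2 - t1) / τ.T⌋ with hGdef
    set M := MOD (t2 - t1) τ.T with hMdef
    have hM0 : 0 ≤ M := MOD_nonneg hT _
    have hMT : M < τ.T := MOD_lt hT _
    have hMeq : t2 - t1 = (G : ℝ) * τ.T + M := by rw [hMdef]; unfold MOD; ring
    have hG0 : (0:ℤ) ≤ G := Int.floor_nonneg.mpr (div_nonneg (by linarith) hT.le)
    have hA1 : (A.card : ℝ) ≤ (f1 : ℝ) + 1 := by
      by_cases hMD : M < τ.D
      · have hf1G : f1 = G - 1 := by
          rw [hf1def]
          rw [Int.floor_eq_iff]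
          constructor
          · rw [le_div_iff₀ hT]; push_cast; nlinarith [τ.hDT]
          · rw [div_lt_iff₀ hT]; push_cast; nlinarith
        by_cases hMDL : M ≤ τ.D - τ.DL
        · -- short residue: ceil bound gives G
          have := hAcard (f1 + 1) (by omega) (fun hAn => by
            have h1 := hAceil hAn
            have h2 : ⌈(t2 - τ.D - (t1 - τ.DL)) / τ.T⌉ ≤ G := by
              apply Int.ceil_le.mpr
              rw [div_le_iff₀ hT]
              push_cast
              linarith [hMeq, hMDL]
            omega)
          push_cast at this ⊢
          linarith
        · -- D - DL < M < D : ¬case2 forces t2 < G·T + D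
          push_neg at hMDL
          have ht2GT : t2 < (G : ℝ) * τ.T + τ.D := by
            by_contra h
            push_neg at h
            exact hnc2 ⟨hMDL, hMD, h⟩
          have := hAcard (f1 + 1) (by omega) (fun hAn => by
            have h1 := sep_card_Icc τ.T hT A hAsep 0 (t2 - τ.D)
              (fun x hx => ⟨hpos x (Finset.filter_subset _ _ hx), (hAmem x hx).2⟩) hAn
            rw [sub_zero] at h1
            have h2 : f2 ≤ G - 1 := by
              have : f2 < G := Int.floor_lt.mpr (by rw [div_lt_iff₀ hT]; linarith)
              omega
            omega)
          push_cast at this ⊢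
          linarith
      · -- M ≥ D
        push_neg at hMD
        have hf1G : f1 = G := by
          rw [hf1def, Int.floor_eq_iff]
          constructor
          · rw [le_div_iff₀ hT]; push_cast; linarith [hMeq, hMD]
          · rw [div_lt_iff₀ hT]; push_cast; linarith [hMeq, hMT, hD0]
        have := hAcard (f1 + 1) (by omega) (fun hAn => by
          have h1 := hAceil hAn
          have h2 : ⌈(t2 - τ.D - (t1 - τ.DL)) / τ.T⌉ ≤ G + 1 := by
            apply Int.ceil_le.mpr
            rw [div_le_iff₀ hT]
            push_cast
            linarith [hMeq, hMT, τ.hDLD]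
          omega)
        push_cast at this ⊢
        linarith
    rw [hdbfL2, hdbfH, hs]
    apply budget _ _ _ _ _ _ _ hCL τ.hCLCH (Nat.cast_nonneg _) hP0 hQ0' le_rfl
      (by nlinarith [mul_le_mul_of_nonneg_left hA1 (sub_nonneg.mpr τ.hCLCH)])
      hABsum (Nat.cast_nonneg _)

/-- job-level soundness of the demand bound of Theorem 1 of the
paper. Summing, over all tasks, the job-level demand (unnecessary-job style demand
for LC tasks and HC tasks in case 1; criticality-split demand for HC tasks in case 2
or 3) yields at most the new-test bound `N(t1,t2)`. -/
theorem new_test_demand_sound {n : ℕ} (τ : Fin n → Task) (hc : Fin n → Bool)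
    (hLC : ∀ i, hc i = false → (τ i).CL = (τ i).CH ∧ (τ i).DL = (τ i).D)
    (t1 t2 : ℝ) (ht1 : 0 ≤ t1) (ht12 : t1 < t2)
    (R : Fin n → Finset ℝ) (hR : ∀ i, ReleaseSet (τ i) (R i)) :
    (∑ i ∈ Uset τ hc t1 t2,
        ((τ i).CL * (((R i).filter (fun x => x + (τ i).DL ≤ t1)).card : ℝ) +
          ∑ x ∈ (R i).filter
              (fun x => x < t1 ∧ t1 < x + (τ i).DL ∧ x + (τ i).DL ≤ t2),
            min (τ i).CL (t1 - x))) +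
      (∑ i ∈ H2set τ hc t1 t2 ∪ H3set τ hc t1 t2,
        ((τ i).CH *
            (((R i).filter (fun x => x + (τ i).D ≤ t2 ∧ t1 < x + (τ i).DL)).card : ℝ) +
          (τ i).CL *
            (((R i).filter (fun x => x + (τ i).D ≤ t2 ∧ x + (τ i).DL ≤ t1)).card : ℝ))) ≤
      Ntest τ hc t1 t2 := by
  have hdisj : Disjoint (H2set τ hc t1 t2) (H3set τ hc t1 t2) := by
    rw [Finset.disjoint_left]
    intro i hi2 hi3
    exact ((Finset.mem_filter.mp hi3).2.2).2 (Finset.mem_filter.mp hi2).2.2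
  rw [Finset.sum_union hdisj]
  unfold Ntest
  have h1 := Finset.sum_le_sum (s := Uset τ hc t1 t2)
    (fun i _ => lemA (τ i) (R i) (hR i) t1 t2 ht1 ht12)
  have h2 := Finset.sum_le_sum (s := H2set τ hc t1 t2)
    (fun i _ => lemB_main (τ i) (R i) (hR i) t1 t2 ht1 ht12 (τ i).CH (Or.inl rfl))
  have h3 := Finset.sum_le_sum (s := H3set τ hc t1 t2)
    (fun i hi => lemB_main (τ i) (R i) (hR i) t1 t2 ht1 ht12 (τ i).CL
      (Or.inr ⟨rfl, ((Finset.mem_filter.mp hi).2.2).2⟩))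
  linarith

end MC
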